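/- Let K be a finite simplicial complex, and for each d-simplex α of K let W(α) ≥ W_min(α) > 0 be weights. Suppose there is a measure space D, measurable sets Ã_α ⊆ D for each d-simplex α, and an integrable f : D → ℝ with W_min(α) = ∫_{Ã_α} f. Define the d-chain γ_min by γ_min(α) = 1 if W_min(α) = W(α) and 0 otherwise, and assume Σ_α γ_min(α)·1_{Ã_α}(x) = 1 for almost all x ∈ D. Then among all real d-chains γ satisfying Σ_α γ(α)·1_{Ã_α}(x) = 1 for almost all x ∈ D, the weighted ℓ1-norm ‖γ‖_{1,W} = Σ_α W(α)|γ(α)| attains its minimum at a unique chain, namely γ = γ_min. -/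

import Mathlib

open scoped BigOperators
open MeasureTheory Set

/-- Key integral identity: if `∑ α, γ α * 1_{A α} = 1` a.e., then
`∑ α, γ α * ∫_{A α} f = ∫ f`. -/
lemma chain_integral_identity
    {ι : Type*} [Fintype ι]
    {D : Type*} [MeasurableSpace D] (μ : Measure D)
    (A : ι → Set D) (hA : ∀ α, MeasurableSet (A α))
    (f : D → ℝ) (hf : Integrable f μ) (γ : ι → ℝ)
    (h : ∀ᵐ x ∂μ, ∑ α, γ α * (A α).indicator (fun _ => (1 : ℝ)) x = 1) :
    ∑ α, γ α * ∫ x in A α, f x ∂μ = ∫ x, f x ∂μ := by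
  classical
  have h1 : ∫ x, (∑ α, γ α * (A α).indicator (fun _ => (1 : ℝ)) x) * f x ∂μ
      = ∫ x, f x ∂μ :=
    integral_congr_ae (h.mono fun x hx => by dsimp only; rw [hx, one_mul])
  have h2 : ∀ x, (∑ α, γ α * (A α).indicator (fun _ => (1 : ℝ)) x) * f x
      = ∑ α, γ α * (A α).indicator f x := by
    intro x
    rw [Finset.sum_mul]
    refine Finset.sum_congr rfl fun α _ => ?_
    by_cases hx : x ∈ A α <;>
      simp [Set.indicator_of_mem, Set.indicator_of_notMem, hx, mul_assoc]
  rw [← h1]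
  simp_rw [h2]
  rw [integral_finset_sum _ (fun α _ => (hf.indicator (hA α)).const_mul _)]
  refine Finset.sum_congr rfl fun α _ => ?_
  rw [MeasureTheory.integral_const_mul, integral_indicator (hA α)]

/-- **Weighted `ℓ¹` minimization over chains (technical lemma).**
Let `ι` index the `d`-simplices of a finite complex `K`, with weights
`W α ≥ Wmin α > 0`.  Suppose there are measurable sets `A α ⊆ D` in a measure
space `(D, μ)` and an integrable `f : D → ℝ` with `Wmin α = ∫_{A α} f`.
Define `γmin α = 1` if `Wmin α = W α` and `0` otherwise, and assume
`∑ α, γmin α · 1_{A α} = 1` a.e. on `D`.  Then among all real chains `γ`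
satisfying `∑ α, γ α · 1_{A α} = 1` a.e., the weighted norm
`‖γ‖_{1,W} = ∑ α, W α |γ α|` attains its minimum exactly at `γ = γmin`. -/
theorem weighted_l1_min_unique
    {ι : Type*} [Fintype ι]
    {D : Type*} [MeasurableSpace D] (μ : Measure D)
    (W Wmin : ι → ℝ)
    (hWpos : ∀ α, 0 < Wmin α) (hW : ∀ α, Wmin α ≤ W α)
    (A : ι → Set D) (hA : ∀ α, MeasurableSet (A α))
    (f : D → ℝ) (hf : Integrable f μ)
    (hWmin : ∀ α, Wmin α = ∫ x in A α, f x ∂μ)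
    (γmin : ι → ℝ)
    (hγmin : γmin = fun α => if Wmin α = W α then (1 : ℝ) else 0)
    (hcover : ∀ᵐ x ∂μ, ∑ α, γmin α * (A α).indicator (fun _ => (1 : ℝ)) x = 1) :
    ∀ γ : ι → ℝ,
      (∀ᵐ x ∂μ, ∑ α, γ α * (A α).indicator (fun _ => (1 : ℝ)) x = 1) →
      (∑ α, W α * |γmin α| ≤ ∑ α, W α * |γ α|) ∧
      (∑ α, W α * |γ α| = ∑ α, W α * |γmin α| → γ = γmin) := by
  classical
  have hγm : ∀ α, γmin α = if Wmin α = W α then (1 : ℝ) else 0 := fun α => by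
    rw [hγmin]
  have hWminInt : ∀ γ : ι → ℝ,
      (∀ᵐ x ∂μ, ∑ α, γ α * (A α).indicator (fun _ => (1 : ℝ)) x = 1) →
      ∑ α, γ α * Wmin α = ∫ x, f x ∂μ := by
    intro γ hγ
    simp_rw [hWmin]
    exact chain_integral_identity μ A hA f hf γ hγ
  have hbase : ∑ α, W α * |γmin α| = ∑ α, γmin α * Wmin α := by
    refine Finset.sum_congr rfl fun α _ => ?_
    rw [hγm α]
    by_cases h : Wmin α = W α <;> simp [h]
  have hCmin : ∑ α, γmin α * Wmin α = ∫ x, f x ∂μ := hWminInt γmin hcover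
  intro γ hγ
  have hCγ : ∑ α, γ α * Wmin α = ∫ x, f x ∂μ := hWminInt γ hγ
  have step1 : ∑ α, γ α * Wmin α ≤ ∑ α, |γ α| * Wmin α :=
    Finset.sum_le_sum fun α _ =>
      mul_le_mul_of_nonneg_right (le_abs_self _) (hWpos α).le
  have step2 : ∑ α, |γ α| * Wmin α ≤ ∑ α, |γ α| * W α :=
    Finset.sum_le_sum fun α _ =>
      mul_le_mul_of_nonneg_left (hW α) (abs_nonneg _)
  have hineq : ∑ α, W α * |γmin α| ≤ ∑ α, W α * |γ α| := by
    rw [hbase, hCmin, ← hCγ]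
    calc ∑ α, γ α * Wmin α ≤ ∑ α, |γ α| * W α := step1.trans step2
    _ = ∑ α, W α * |γ α| := by simp [mul_comm]
  refine ⟨hineq, fun heq => ?_⟩
  have htot : ∑ α, |γ α| * W α = ∑ α, γ α * Wmin α := by
    have h' : ∑ α, W α * |γ α| = ∑ α, γ α * Wmin α := by
      rw [heq, hbase, hCmin, hCγ]
    calc ∑ α, |γ α| * W α = ∑ α, W α * |γ α| := by simp [mul_comm]
    _ = ∑ α, γ α * Wmin α := h'
  have e1 : ∑ α, γ α * Wmin α = ∑ α, |γ α| * Wmin α :=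
    le_antisymm step1 (step2.trans_eq htot)
  have e2 : ∑ α, |γ α| * Wmin α = ∑ α, |γ α| * W α :=
    le_antisymm step2 (htot.trans e1).le
  have habs : ∀ α, γ α = |γ α| := by
    intro α
    have := (Finset.sum_eq_sum_iff_of_le
      (fun i _ => mul_le_mul_of_nonneg_right (le_abs_self (γ i)) (hWpos i).le)).mp e1
        α (Finset.mem_univ α)
    exact mul_right_cancel₀ (hWpos α).ne' this
  have hzero : ∀ α, Wmin α ≠ W α → γ α = 0 := by
    intro α hne
    have h2 := (Finset.sum_eq_sum_iff_of_le
      (fun i _ => mul_le_mul_of_nonneg_left (hW i) (abs_nonneg (γ i)))).mp e2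
        α (Finset.mem_univ α)
    by_contra hγ0
    have habs0 : |γ α| ≠ 0 := fun h => hγ0 (abs_eq_zero.mp h)
    exact hne (mul_left_cancel₀ habs0 h2)
  funext α
  by_cases h : Wmin α = W α
  · -- show γ α = 1
    rw [hγm α, if_pos h]
    have hμA : μ (A α) ≠ 0 := by
      intro h0
      have hr : μ.restrict (A α) = 0 := Measure.restrict_eq_zero.mpr h0
      have hw := hWmin α
      rw [hr] at hw
      simp at hw
      exact (hWpos α).ne' hw
    have hae : ∀ᵐ x ∂(μ.restrict (A α)), γ α = 1 := by
      filter_upwards [ae_restrict_of_ae hcover, ae_restrict_of_ae hγ,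
        ae_restrict_mem (hA α)] with x hc hg hxA
      have hindα : (A α).indicator (fun _ => (1 : ℝ)) x = 1 :=
        Set.indicator_of_mem hxA _
      have hterm : γmin α * (A α).indicator (fun _ => (1 : ℝ)) x = 1 := by
        rw [hγm α, if_pos h, hindα, one_mul]
      have hsplit := Finset.add_sum_erase Finset.univ
        (fun β => γmin β * (A β).indicator (fun _ => (1 : ℝ)) x) (Finset.mem_univ α)
      have herase : ∑ β ∈ Finset.univ.erase α,
          γmin β * (A β).indicator (fun _ => (1 : ℝ)) x = 0 := by
        linarith [hsplit, hc, hterm]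
      have hnn : ∀ β ∈ Finset.univ.erase α,
          0 ≤ γmin β * (A β).indicator (fun _ => (1 : ℝ)) x := by
        intro β _
        refine mul_nonneg ?_ (Set.indicator_nonneg (fun _ _ => zero_le_one) x)
        rw [hγm β]; split_ifs <;> norm_num
      have hz := (Finset.sum_eq_zero_iff_of_nonneg hnn).mp herase
      have hsum : ∑ β, γ β * (A β).indicator (fun _ => (1 : ℝ)) x
          = γ α * (A α).indicator (fun _ => (1 : ℝ)) x := by
        refine Finset.sum_eq_single_of_mem α (Finset.mem_univ α) fun β _ hβα => ?_
        by_cases hb : Wmin β = W β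
        · have hzb := hz β (Finset.mem_erase.mpr ⟨hβα, Finset.mem_univ β⟩)
          rw [hγm β, if_pos hb, one_mul] at hzb
          rw [hzb, mul_zero]
        · rw [hzero β hb, zero_mul]
      rw [hsum, hindα, mul_one] at hg
      exact hg
    by_contra hne
    have hfalse : ∀ᵐ _x ∂(μ.restrict (A α)), False := hae.mono fun x hx => hne hx
    have : μ.restrict (A α) = 0 :=
      ae_eq_bot.mp (Filter.eventually_false_iff_eq_bot.mp hfalse)
    exact hμA (Measure.restrict_eq_zero.mp this)
  · rw [hγm α, if_neg h]
    exact hzero α h
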